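/- Let r : ℝ → ℝ be twice differentiable and suppose that for every t ∈ ℝ: if r(t) ≥ 0 then r''(t) ≥ 0, and if r(t) ≤ 0 then r''(t) ≤ 0. If r(0)·r'(0) ≥ 0, then |r(t)| ≥ |r(0)| + |r'(0)|·t for all t ≥ 0. If r(0)·r'(0) ≤ 0, then |r(−t)| ≥ |r(0)| + |r'(0)|·t for all t ≥ 0. -/

import Mathlib

/-- Convexity bound on an interval where `r` is nonnegative. -/
private lemma stmt14_aux_P (r r' r'' : ℝ → ℝ)
    (h1 : ∀ t : ℝ, HasDerivAt r (r' t) t)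
    (h2 : ∀ t : ℝ, HasDerivAt r' (r'' t) t)
    (hsign1 : ∀ t : ℝ, 0 ≤ r t → 0 ≤ r'' t)
    (b : ℝ) (hb : 0 ≤ b) (hpos : ∀ s ∈ Set.Icc (0:ℝ) b, 0 ≤ r s) :
    r 0 + r' 0 * b ≤ r b := by
  have hr'mono : MonotoneOn r' (Set.Icc 0 b) := by
    apply monotoneOn_of_deriv_nonneg (convex_Icc 0 b)
      (fun x _ => (h2 x).continuousAt.continuousWithinAt)
      (fun x hx => ((h2 x).differentiableAt).differentiableWithinAt)
    intro x hx
    rw [interior_Icc] at hx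
    rw [(h2 x).deriv]
    exact hsign1 x (hpos x ⟨le_of_lt hx.1, le_of_lt hx.2⟩)
  have hφmono : MonotoneOn (fun s => r s - r' 0 * s) (Set.Icc 0 b) := by
    apply monotoneOn_of_deriv_nonneg (convex_Icc 0 b)
    · intro x _
      exact ((h1 x).continuousAt.continuousWithinAt).sub
        ((continuous_const.mul continuous_id).continuousWithinAt)
    · intro x hx
      exact (((h1 x).sub ((hasDerivAt_id x).const_mul (r' 0))).differentiableAt).differentiableWithinAt
    · intro x hx
      rw [interior_Icc] at hx
      have hd : HasDerivAt (fun s => r s - r' 0 * s) (r' x - r' 0 * 1) x :=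
        (h1 x).sub ((hasDerivAt_id x).const_mul (r' 0))
      rw [hd.deriv]
      have := hr'mono (Set.left_mem_Icc.2 hb) ⟨le_of_lt hx.1, le_of_lt hx.2⟩ (le_of_lt hx.1)
      linarith
  have := hφmono (Set.left_mem_Icc.2 hb) (Set.right_mem_Icc.2 hb) hb
  simp only [mul_zero, sub_zero] at this
  linarith

/-- Main one-sided lemma: outward-moving with `r 0 ≥ 0`, `r' 0 ≥ 0`, not both zero. -/
private lemma stmt14_aux_main (r r' r'' : ℝ → ℝ)
    (h1 : ∀ t : ℝ, HasDerivAt r (r' t) t)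
    (h2 : ∀ t : ℝ, HasDerivAt r' (r'' t) t)
    (hsign1 : ∀ t : ℝ, 0 ≤ r t → 0 ≤ r'' t)
    (hsign2 : ∀ t : ℝ, r t ≤ 0 → r'' t ≤ 0)
    (hr0 : 0 ≤ r 0) (hr'0 : 0 ≤ r' 0) (hne : 0 < r 0 + r' 0) :
    ∀ t : ℝ, 0 ≤ t → r 0 + r' 0 * t ≤ r t := by
  -- g = r * r' is monotone
  have gmono : Monotone (fun t => r t * r' t) := by
    apply monotone_of_deriv_nonneg
      (fun x => ((h1 x).mul (h2 x)).differentiableAt)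
    intro x
    rw [((h1 x).mul (h2 x)).deriv]
    rcases le_or_gt 0 (r x) with h | h
    · nlinarith [hsign1 x h, mul_self_nonneg (r' x)]
    · nlinarith [hsign2 x h.le, mul_self_nonneg (r' x)]
  have hg : ∀ t : ℝ, 0 ≤ t → 0 ≤ r t * r' t := fun t ht =>
    le_trans (mul_nonneg hr0 hr'0) (gmono ht)
  -- r^2 monotone on [0, ∞)
  have hsq : ∀ a b : ℝ, 0 ≤ a → a ≤ b → r a ^ 2 ≤ r b ^ 2 := by
    intro a b ha hab
    have : MonotoneOn (fun t => r t ^ 2) (Set.Ici 0) := by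
      apply monotoneOn_of_deriv_nonneg (convex_Ici 0)
        (fun x _ => (((h1 x).pow 2).continuousAt).continuousWithinAt)
        (fun x _ => (((h1 x).pow 2).differentiableAt).differentiableWithinAt)
      intro x hx
      rw [interior_Ici] at hx
      rw [((h1 x).pow 2).deriv]
      have := hg x hx.le
      norm_num
      nlinarith
    exact this (Set.mem_Ici.2 ha) (Set.mem_Ici.2 (ha.trans hab)) hab
  -- positivity propagation
  have Qpos : ∀ a : ℝ, 0 ≤ a → 0 < r a → ∀ t, a ≤ t → 0 < r t := by
    intro a ha hra t hat
    by_contra hcon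
    push_neg at hcon
    have hzero : ∃ s ∈ Set.Icc a t, r s = 0 := by
      have hiv := intermediate_value_Icc' hat
        (fun x _ => (h1 x).continuousAt.continuousWithinAt)
      have : (0:ℝ) ∈ Set.Icc (r t) (r a) := ⟨hcon, hra.le⟩
      obtain ⟨s, hs, hrs⟩ := hiv this
      exact ⟨s, hs, hrs⟩
    obtain ⟨s, hs, hrs⟩ := hzero
    have := hsq a s ha hs.1
    rw [hrs] at this
    nlinarith
  intro t ht
  rcases lt_or_eq_of_le hr0 with hr0pos | hr0eq
  · -- r 0 > 0
    exact stmt14_aux_P r r' r'' h1 h2 hsign1 t ht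
      (fun s hs => (Qpos 0 le_rfl hr0pos s hs.1).le)
  · -- r 0 = 0
    rcases lt_or_eq_of_le hr'0 with hr'0pos | hr'0eq
    · -- r' 0 > 0 : find δ > 0 near 0 with r δ > 0
      apply stmt14_aux_P r r' r'' h1 h2 hsign1 t ht
      intro s hs
      rcases eq_or_lt_of_le hs.1 with h0s | h0s
      · rw [← h0s, ← hr0eq]
      have hslope : ∀ᶠ u in nhdsWithin 0 (Set.Ioi 0), 0 < slope r 0 u :=
        ((hasDerivAt_iff_tendsto_slope.1 (h1 0)).eventually
          (eventually_gt_nhds hr'0pos)).filter_mono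
          (nhdsWithin_mono 0 (fun x hx => ne_of_gt hx))
      have hIoo : Set.Ioo (0:ℝ) s ∈ nhdsWithin (0:ℝ) (Set.Ioi 0) :=
        Ioo_mem_nhdsGT_of_mem ⟨le_rfl, h0s⟩
      obtain ⟨δ, hδslope, hδmem⟩ := (hslope.and (Filter.eventually_mem_set.2 hIoo)).exists
      have hδpos : 0 < δ := hδmem.1
      have hrδ : 0 < r δ := by
        rw [slope_def_field, ← hr0eq, sub_zero, sub_zero] at hδslope
        have h2' := mul_pos hδslope hδpos
        rwa [div_mul_cancel₀ _ (ne_of_gt hδpos)] at h2'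
      exact (Qpos δ hδmem.1.le hrδ s hδmem.2.le).le
    · -- r 0 = 0, r' 0 = 0 : excluded by hne
      exfalso; rw [← hr0eq, ← hr'0eq] at hne; simp at hne


/-- Part 1 as a standalone lemma, to be applied also to the time-reversed function. -/
private lemma stmt14_aux_fwd (r r' r'' : ℝ → ℝ)
    (h1 : ∀ t : ℝ, HasDerivAt r (r' t) t)
    (h2 : ∀ t : ℝ, HasDerivAt r' (r'' t) t)
    (hsign1 : ∀ t : ℝ, 0 ≤ r t → 0 ≤ r'' t)
    (hsign2 : ∀ t : ℝ, r t ≤ 0 → r'' t ≤ 0) :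
    0 ≤ r 0 * r' 0 → ∀ t : ℝ, 0 ≤ t → |r 0| + |r' 0| * t ≤ |r t| := by
  intro hp t ht
  -- negated function data
  have h1n : ∀ t : ℝ, HasDerivAt (fun s => -r s) ((fun s => -r' s) t) t :=
    fun t => (h1 t).neg
  have h2n : ∀ t : ℝ, HasDerivAt (fun s => -r' s) ((fun s => -r'' s) t) t :=
    fun t => (h2 t).neg
  have hs1n : ∀ t : ℝ, 0 ≤ -r t → 0 ≤ -r'' t := by
    intro t hh; have := hsign2 t (by linarith); linarith
  have hs2n : ∀ t : ℝ, -r t ≤ 0 → -r'' t ≤ 0 := by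
    intro t hh; have := hsign1 t (by linarith); linarith
  rcases lt_trichotomy (r 0) 0 with hr0 | hr0 | hr0
  · -- r 0 < 0, hence r' 0 ≤ 0; apply main to -r
    have hr'0 : r' 0 ≤ 0 := by nlinarith
    have := stmt14_aux_main (fun s => -r s) (fun s => -r' s) (fun s => -r'' s)
      h1n h2n hs1n hs2n (by simpa using hr0.le) (by simpa using hr'0)
      (by linarith) t ht
    rw [abs_of_neg hr0, abs_of_nonpos hr'0]
    rcases abs_cases (r t) with ⟨h, _⟩ | ⟨h, _⟩ <;> nlinarith
  · -- r 0 = 0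
    rcases lt_trichotomy (r' 0) 0 with hr'0 | hr'0 | hr'0
    · have := stmt14_aux_main (fun s => -r s) (fun s => -r' s) (fun s => -r'' s)
        h1n h2n hs1n hs2n (by simp [hr0]) (by simpa using hr'0.le)
        (by linarith) t ht
      rw [hr0, abs_zero, abs_of_nonpos hr'0.le]
      rcases abs_cases (r t) with ⟨h, _⟩ | ⟨h, _⟩ <;> nlinarith
    · rw [hr0, hr'0]; simp [abs_nonneg]
    · have := stmt14_aux_main r r' r'' h1 h2 hsign1 hsign2
        (le_of_eq hr0.symm) hr'0.le (by linarith) t ht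
      rw [hr0, abs_zero, abs_of_pos hr'0]
      rcases abs_cases (r t) with ⟨h, _⟩ | ⟨h, _⟩ <;> nlinarith
  · -- r 0 > 0, hence r' 0 ≥ 0
    have hr'0 : 0 ≤ r' 0 := by nlinarith
    have := stmt14_aux_main r r' r'' h1 h2 hsign1 hsign2 hr0.le hr'0
      (by linarith) t ht
    rw [abs_of_pos hr0, abs_of_nonneg hr'0]
    rcases abs_cases (r t) with ⟨h, _⟩ | ⟨h, _⟩ <;> nlinarith

theorem stmt14 (r r' r'' : ℝ → ℝ)
    (h1 : ∀ t : ℝ, HasDerivAt r (r' t) t)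
    (h2 : ∀ t : ℝ, HasDerivAt r' (r'' t) t)
    (hsign1 : ∀ t : ℝ, 0 ≤ r t → 0 ≤ r'' t)
    (hsign2 : ∀ t : ℝ, r t ≤ 0 → r'' t ≤ 0) :
    (0 ≤ r 0 * r' 0 → ∀ t : ℝ, 0 ≤ t → |r 0| + |r' 0| * t ≤ |r t|) ∧
    (r 0 * r' 0 ≤ 0 → ∀ t : ℝ, 0 ≤ t → |r 0| + |r' 0| * t ≤ |r (-t)|) := by
  constructor
  · exact stmt14_aux_fwd r r' r'' h1 h2 hsign1 hsign2
  · intro hp t ht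
    have h1' : ∀ u : ℝ, HasDerivAt (fun s => r (-s)) ((fun s => -r' (-s)) u) u := by
      intro u
      have := (h1 (-u)).comp u (hasDerivAt_neg u)
      simpa [Function.comp_def, mul_comm] using this
    have h2' : ∀ u : ℝ, HasDerivAt (fun s => -r' (-s)) ((fun s => r'' (-s)) u) u := by
      intro u
      have := ((h2 (-u)).comp u (hasDerivAt_neg u)).neg
      exact this.congr_deriv (by simp)
    have hs1' : ∀ u : ℝ, 0 ≤ r (-u) → 0 ≤ r'' (-u) := fun u h => hsign1 (-u) h
    have hs2' : ∀ u : ℝ, r (-u) ≤ 0 → r'' (-u) ≤ 0 := fun u h => hsign2 (-u) h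
    have := stmt14_aux_fwd (fun s => r (-s)) (fun s => -r' (-s)) (fun s => r'' (-s))
      h1' h2' hs1' hs2' (by simp only [neg_zero]; nlinarith) t ht
    simpa using this
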